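/- Let n ≥ 1, let S₀ be a symmetric n×n real matrix, and let t ∈ ℝ be such that cos t · I − sin t · S₀ is invertible. Then, under the identification ℝ^{2n} ≅ ℂⁿ, multiplication by e^{it} maps the Lagrangian subspace λ_{S₀} onto λ_{S(t)}, where S(t) = (sin t · I + cos t · S₀)(cos t · I − sin t · S₀)^{-1}; moreover S(t) is symmetric and the derivative of t ↦ S(t) at t = 0 is I + S₀². -/

import Mathlib

open Matrix

attribute [local instance] Matrix.linftyOpNormedRing Matrix.linftyOpNormedAlgebra

private lemma cplx_aux (a b x y : ℝ) :
    ((b : ℂ) + (a : ℂ) * Complex.I) * ((x : ℂ) + (y : ℂ) * Complex.I)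
      = ((b * x - a * y : ℝ) : ℂ) + ((a * x + b * y : ℝ) : ℂ) * Complex.I := by
  push_cast
  linear_combination (a * y : ℂ) * Complex.I_sq



open Matrix

/-- The Lagrangian subspace `λ_S = {q + iSq : q ∈ ℝⁿ} ⊆ ℂⁿ`
(under `ℝ²ⁿ ≅ ℂⁿ`, `(q,p) ↦ q + ip`). -/
noncomputable def graphC (n : ℕ) (S : Matrix (Fin n) (Fin n) ℝ) :
    Submodule ℝ (Fin n → ℂ) :=
  Submodule.span ℝ
    {z | ∃ q : Fin n → ℝ, z = fun j => (q j : ℂ) + ((S *ᵥ q) j : ℂ) * Complex.I}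

/-- Multiplication by `e^{it}` as an `ℝ`-linear map of `ℂⁿ ≅ ℝ²ⁿ`. -/
noncomputable def expSmul (n : ℕ) (t : ℝ) : (Fin n → ℂ) →ₗ[ℝ] (Fin n → ℂ) :=
  (LinearMap.lsmul ℂ (Fin n → ℂ) (Complex.exp (t * Complex.I))).restrictScalars ℝ

/-- If `cos t · I − sin t · S₀` is invertible, then multiplication by `e^{it}` maps
`λ_{S₀}` onto `λ_{S(t)}` with `S(t) = (sin t · I + cos t · S₀)(cos t · I − sin t · S₀)⁻¹`;
moreover `S(t)` is symmetric, and the derivative of `t ↦ S(t)` at `t = 0` is `I + S₀²`. -/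
theorem exp_smul_graph (n : ℕ) (hn : 1 ≤ n) (S₀ : Matrix (Fin n) (Fin n) ℝ)
    (hS₀ : S₀.IsSymm) (t : ℝ)
    (hinv : IsUnit (Real.cos t • (1 : Matrix (Fin n) (Fin n) ℝ) - Real.sin t • S₀)) :
    ((Real.sin t • (1 : Matrix (Fin n) (Fin n) ℝ) + Real.cos t • S₀) *
        (Real.cos t • (1 : Matrix (Fin n) (Fin n) ℝ) - Real.sin t • S₀)⁻¹).IsSymm ∧
    (graphC n S₀).map (expSmul n t) =
      graphC n ((Real.sin t • (1 : Matrix (Fin n) (Fin n) ℝ) + Real.cos t • S₀) *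
        (Real.cos t • (1 : Matrix (Fin n) (Fin n) ℝ) - Real.sin t • S₀)⁻¹) ∧
    ∀ i j : Fin n,
      HasDerivAt
        (fun u : ℝ =>
          ((Real.sin u • (1 : Matrix (Fin n) (Fin n) ℝ) + Real.cos u • S₀) *
            (Real.cos u • (1 : Matrix (Fin n) (Fin n) ℝ) - Real.sin u • S₀)⁻¹) i j)
        ((1 + S₀ * S₀) i j) 0 := by
  
  set C : Matrix (Fin n) (Fin n) ℝ := Real.cos t • 1 - Real.sin t • S₀ with hCdef
  set B : Matrix (Fin n) (Fin n) ℝ := Real.sin t • 1 + Real.cos t • S₀ with hBdef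
  have hdet : IsUnit C.det := (Matrix.isUnit_iff_isUnit_det C).mp hinv
  have hcomm : C * B = B * C := by
    rw [hCdef, hBdef]
    simp only [mul_add, add_mul, mul_sub, sub_mul, smul_mul_assoc, mul_smul_comm,
      smul_smul, one_mul, mul_one, mul_comm]
    module
  have hBCi : B * C⁻¹ = C⁻¹ * B := by
    calc B * C⁻¹ = C⁻¹ * (C * B * C⁻¹) := by
          rw [Matrix.mul_assoc C B C⁻¹, Matrix.nonsing_inv_mul_cancel_left _ _ hdet]
      _ = C⁻¹ * (B * C * C⁻¹) := by rw [hcomm]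
      _ = C⁻¹ * B := by rw [Matrix.mul_nonsing_inv_cancel_right _ _ hdet]
  have hCsymm : Cᵀ = C := by
    rw [hCdef]; simp [hS₀.eq, Matrix.transpose_smul]
  have hBsymm : Bᵀ = B := by
    rw [hBdef]; simp [hS₀.eq, Matrix.transpose_smul]
  refine ⟨?_, ?_, ?_⟩
  · -- symmetry
    show (B * C⁻¹)ᵀ = B * C⁻¹
    rw [Matrix.transpose_mul, Matrix.transpose_nonsing_inv, hCsymm, hBsymm, hBCi]
  · -- image of the Lagrangian
    rw [graphC, graphC, Submodule.map_span]
    congr 1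
    have key : ∀ q : Fin n → ℝ,
        (expSmul n t) (fun j => (q j : ℂ) + ((S₀ *ᵥ q) j : ℂ) * Complex.I)
          = fun j => (((C *ᵥ q) j : ℝ) : ℂ) + (((B *ᵥ q) j : ℝ) : ℂ) * Complex.I := by
      intro q
      funext j
      have : (expSmul n t) (fun j => (q j : ℂ) + ((S₀ *ᵥ q) j : ℂ) * Complex.I) j
          = Complex.exp (t * Complex.I) * ((q j : ℂ) + ((S₀ *ᵥ q) j : ℂ) * Complex.I) := rfl
      rw [this, Complex.exp_mul_I, ← Complex.ofReal_cos, ← Complex.ofReal_sin,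
        cplx_aux (Real.sin t) (Real.cos t) (q j) ((S₀ *ᵥ q) j)]
      congr 1
      · congr 1
        rw [hCdef, Matrix.sub_mulVec, Matrix.smul_mulVec, Matrix.smul_mulVec,
          Matrix.one_mulVec]
        simp
      · congr 1
        rw [hBdef, Matrix.add_mulVec, Matrix.smul_mulVec, Matrix.smul_mulVec,
          Matrix.one_mulVec]
        simp
    ext z
    constructor
    · rintro ⟨w, ⟨q, rfl⟩, rfl⟩
      refine ⟨C *ᵥ q, ?_⟩
      rw [key q]
      have : (B * C⁻¹) *ᵥ (C *ᵥ q) = B *ᵥ q := by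
        rw [Matrix.mulVec_mulVec, Matrix.nonsing_inv_mul_cancel_right _ _ hdet]
      rw [this]
    · rintro ⟨q', rfl⟩
      refine ⟨fun j => ((C⁻¹ *ᵥ q') j : ℂ) + ((S₀ *ᵥ (C⁻¹ *ᵥ q')) j : ℂ) * Complex.I,
        ⟨C⁻¹ *ᵥ q', rfl⟩, ?_⟩
      rw [key (C⁻¹ *ᵥ q')]
      have h1 : C *ᵥ (C⁻¹ *ᵥ q') = q' := by
        rw [Matrix.mulVec_mulVec, Matrix.mul_nonsing_inv _ hdet, Matrix.one_mulVec]
      have h2 : B *ᵥ (C⁻¹ *ᵥ q') = (B * C⁻¹) *ᵥ q' := by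
        rw [Matrix.mulVec_mulVec]
      rw [h1, h2]
  · -- derivative
    intro i j
    have hCder : HasDerivAt
        (fun u : ℝ => Real.cos u • (1 : Matrix (Fin n) (Fin n) ℝ) - Real.sin u • S₀) (-S₀) 0 := by
      have := ((Real.hasDerivAt_cos 0).smul_const (1 : Matrix (Fin n) (Fin n) ℝ)).sub
        ((Real.hasDerivAt_sin 0).smul_const S₀)
      convert this using 1
      case e'_9 => simp
      all_goals rfl
    have hBder : HasDerivAt
        (fun u : ℝ => Real.sin u • (1 : Matrix (Fin n) (Fin n) ℝ) + Real.cos u • S₀) (1 : Matrix (Fin n) (Fin n) ℝ) 0 := by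
      have := ((Real.hasDerivAt_sin 0).smul_const (1 : Matrix (Fin n) (Fin n) ℝ)).add
        ((Real.hasDerivAt_cos 0).smul_const S₀)
      convert this using 1
      case e'_9 => simp
      all_goals rfl
    have hC0 : (Real.cos (0:ℝ) • (1 : Matrix (Fin n) (Fin n) ℝ) - Real.sin (0:ℝ) • S₀) = 1 := by simp
    have hB0 : (Real.sin (0:ℝ) • (1 : Matrix (Fin n) (Fin n) ℝ) + Real.cos (0:ℝ) • S₀) = S₀ := by simp
    have hFinv : HasFDerivAt (Ring.inverse : Matrix (Fin n) (Fin n) ℝ → Matrix (Fin n) (Fin n) ℝ)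
        (-(ContinuousLinearMap.mulLeftRight ℝ (Matrix (Fin n) (Fin n) ℝ) 1 1)) (1 : Matrix (Fin n) (Fin n) ℝ) := by
      simpa using hasFDerivAt_ringInverse (𝕜 := ℝ) (R := Matrix (Fin n) (Fin n) ℝ) 1
    have hIder : HasDerivAt
        (fun u : ℝ => Ring.inverse (Real.cos u • (1 : Matrix (Fin n) (Fin n) ℝ) - Real.sin u • S₀)) S₀ 0 := by
      have hF : HasFDerivAt (Ring.inverse : Matrix (Fin n) (Fin n) ℝ → Matrix (Fin n) (Fin n) ℝ)
          (-(ContinuousLinearMap.mulLeftRight ℝ (Matrix (Fin n) (Fin n) ℝ) 1 1))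
          (Real.cos (0:ℝ) • (1 : Matrix (Fin n) (Fin n) ℝ) - Real.sin (0:ℝ) • S₀) := by rw [hC0]; exact hFinv
      have := hF.comp_hasDerivAt 0 hCder
      convert this using 1
      case e'_9 => simp
      all_goals rfl
    have hprod : HasDerivAt
        (fun u : ℝ => (Real.sin u • (1 : Matrix (Fin n) (Fin n) ℝ) + Real.cos u • S₀) *
          Ring.inverse (Real.cos u • (1 : Matrix (Fin n) (Fin n) ℝ) - Real.sin u • S₀)) (1 + S₀ * S₀) 0 := by
      have := hBder.mul hIder
      convert this using 1
      case e'_9 => simp [hB0, hC0]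
      all_goals rfl
    have hprod' : HasDerivAt
        (fun u : ℝ => (Real.sin u • (1 : Matrix (Fin n) (Fin n) ℝ) + Real.cos u • S₀) *
          (Real.cos u • (1 : Matrix (Fin n) (Fin n) ℝ) - Real.sin u • S₀)⁻¹) (1 + S₀ * S₀) 0 := by
      convert hprod using 2
      rw [Matrix.nonsing_inv_eq_ringInverse]
    let L : Matrix (Fin n) (Fin n) ℝ →ₗ[ℝ] ℝ :=
      { toFun := fun A => A i j
        map_add' := fun A B => rfl
        map_smul' := fun c A => rfl }
    have := L.toContinuousLinearMap.hasFDerivAt.comp_hasDerivAt 0 hprod'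
    exact this
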